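/- Let n ≥ 2, let v_1, …, v_n be distinct finite sequences of positive integers whose set {v_1,…,v_n} is closed under taking initial segments (so it contains the empty sequence), and let X_1, …, X_n be pairwise distinct infinite sequences of positive integers such that v_k is an initial segment of X_k for each k. Let lcp denote the length of the longest common initial segment, and define Y := ∑_{k≠ℓ} lcp(v_k, v_ℓ), Ŷ := ∑_{k≠ℓ} lcp(X_k, X_ℓ), H := max_k (length of v_k), and Ĥ := max_{k≠ℓ} lcp(X_k, X_ℓ). Then 0 ≤ Ŷ − Y ≤ 2·n·H·Ĥ, and moreover H ≤ Ĥ + 1. -/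

import Mathlib

open Finset

/-- The length of the longest common initial segment of two finite sequences
(given as lists). -/
def lcpList (u w : List ℕ+) : ℕ :=
  ((u.zip w).takeWhile fun p => decide (p.1 = p.2)).length

/-- The length (in `ℕ∞`) of the longest common initial segment of two infinite
sequences. -/
noncomputable def lcpSeq (X Y : ℕ → ℕ+) : ℕ∞ :=
  ⨆ l ∈ {l : ℕ | ∀ i < l, X i = Y i}, (l : ℕ∞)

lemma lcpList_nil_right (u : List ℕ+) : lcpList u [] = 0 := by cases u <;> rfl

lemma lcpList_cons (a b : ℕ+) (u w : List ℕ+) :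
    lcpList (a::u) (b::w) = if a = b then lcpList u w + 1 else 0 := by
  simp only [lcpList, List.zip_cons_cons, List.takeWhile_cons]
  by_cases hab : a = b <;> simp [hab, lcpList, List.zip]

lemma lcpList_le_left (u w : List ℕ+) : lcpList u w ≤ u.length := by
  induction u generalizing w with
  | nil => simp [lcpList]
  | cons a u ih =>
    cases w with
    | nil => simp [lcpList_nil_right]
    | cons b w =>
      rw [lcpList_cons]; split
      · simpa using ih w
      · simp

lemma lcpList_le_right (u w : List ℕ+) : lcpList u w ≤ w.length := by
  induction u generalizing w with
  | nil => simp [lcpList]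
  | cons a u ih =>
    cases w with
    | nil => simp [lcpList_nil_right]
    | cons b w =>
      rw [lcpList_cons]; split
      · simpa using ih w
      · simp

lemma lcpList_get (u w : List ℕ+) (i : ℕ) (h : i < lcpList u w) : u[i]? = w[i]? := by
  induction u generalizing w i with
  | nil => simp [lcpList] at h
  | cons a u ih =>
    cases w with
    | nil => simp [lcpList_nil_right] at h
    | cons b w =>
      rw [lcpList_cons] at h
      split at h
      · cases i with
        | zero => simp_all
        | succ i => simpa using ih w i (by omega)
      · omega

lemma le_lcpList (u w : List ℕ+) (l : ℕ) (hu : l ≤ u.length) (hw : l ≤ w.length)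
    (h : ∀ i < l, u[i]? = w[i]?) : l ≤ lcpList u w := by
  induction u generalizing w l with
  | nil => simp at hu; omega
  | cons a u ih =>
    cases w with
    | nil => simp at hw; omega
    | cons b w =>
      cases l with
      | zero => omega
      | succ l =>
        have hab : a = b := by have := h 0 (Nat.succ_pos _); simpa using this
        rw [lcpList_cons, if_pos hab]
        have := ih w l (by simpa using hu) (by simpa using hw)
          (fun i hi => by simpa using h (i+1) (by omega))
        omega

lemma lcpList_prefix (u w : List ℕ+) (h : u <+: w) : lcpList u w = u.length := by
  refine le_antisymm (lcpList_le_left u w) (le_lcpList u w _ le_rfl h.length_le ?_)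
  intro i hi
  rw [List.getElem?_eq_getElem hi, List.getElem?_eq_getElem (lt_of_lt_of_le hi h.length_le)]
  exact congrArg some (List.IsPrefix.getElem h hi)

lemma prefix_of_lcpList (u w : List ℕ+) (h : u.length ≤ lcpList u w) : u <+: w := by
  induction u generalizing w with
  | nil => simp
  | cons a u ih =>
    cases w with
    | nil => simp [lcpList_nil_right] at h
    | cons b w =>
      rw [lcpList_cons] at h
      split at h
      · subst ‹a = b›
        exact List.cons_prefix_cons.mpr ⟨rfl, ih w (by simpa using h)⟩
      · exact absurd h (by simp)

open Classical in
noncomputable def natLcp (X Y : ℕ → ℕ+) : ℕ :=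
  if h : ∃ i, X i ≠ Y i then Nat.find h else 0

open Classical in
lemma natLcp_spec_lt (X Y : ℕ → ℕ+) (i : ℕ) (hi : i < natLcp X Y) : X i = Y i := by
  unfold natLcp at hi
  split at hi
  · exact not_not.mp (Nat.find_min ‹_› hi)
  · omega

open Classical in
lemma natLcp_spec_ne (X Y : ℕ → ℕ+) (h : X ≠ Y) :
    X (natLcp X Y) ≠ Y (natLcp X Y) := by
  have h' : ∃ i, X i ≠ Y i := Function.ne_iff.mp h
  unfold natLcp
  rw [dif_pos h']
  exact Nat.find_spec h'

lemma le_natLcp (X Y : ℕ → ℕ+) (h : X ≠ Y) (l : ℕ) (hl : ∀ i < l, X i = Y i) :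
    l ≤ natLcp X Y := by
  by_contra hlt
  push_neg at hlt
  exact natLcp_spec_ne X Y h (hl _ hlt)

lemma lcpSeq_eq_natLcp (X Y : ℕ → ℕ+) (h : X ≠ Y) : lcpSeq X Y = (natLcp X Y : ℕ∞) := by
  apply le_antisymm
  · refine iSup₂_le fun l hl => ?_
    rw [Nat.cast_le]
    exact le_natLcp X Y h l hl
  · exact le_iSup₂ (f := fun (l : ℕ) (_ : l ∈ {l : ℕ | ∀ i < l, X i = Y i}) => (l : ℕ∞))
      (natLcp X Y) (fun i hi => natLcp_spec_lt X Y i hi)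

lemma lcpList_comm (u w : List ℕ+) : lcpList u w = lcpList w u := by
  induction u generalizing w with
  | nil => cases w <;> rfl
  | cons a u ih =>
    cases w with
    | nil => rfl
    | cons b w => rw [lcpList_cons, lcpList_cons, ih]; simp [eq_comm]

open Finset

lemma card_prefix_le_1 (n : ℕ) (v : Fin n → List ℕ+) (hvinj : Function.Injective v)
    (H : ℕ) (hH : ∀ k, (v k).length ≤ H) :
    ((Finset.univ : Finset (Fin n)).offDiag.filter fun p => v p.1 <+: v p.2).card ≤ n * H := by
  classical
  have key : (((Finset.univ : Finset (Fin n)).offDiag.filter fun p => v p.1 <+: v p.2)).card ≤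
      ((Finset.univ : Finset (Fin n)) ×ˢ Finset.range H).card := by
    apply Finset.card_le_card_of_injOn (fun p => (p.2, (v p.1).length))
    · intro p hp
      simp only [Finset.mem_coe, Finset.mem_filter, Finset.mem_offDiag] at hp
      obtain ⟨⟨-, -, hne⟩, hpre⟩ := hp
      simp only [Finset.mem_coe, Finset.mem_product, Finset.mem_univ, Finset.mem_range, true_and]
      have hle := hpre.length_le
      have hne' : (v p.1).length ≠ (v p.2).length := by
        intro h
        exact hne (hvinj (hpre.eq_of_length h))
      exact lt_of_lt_of_le (lt_of_le_of_ne hle hne') (hH p.2)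
    · intro p hp q hq heq
      simp only [Finset.coe_filter, Set.mem_setOf_eq, Finset.mem_offDiag] at hp hq
      obtain ⟨-, hp2⟩ := hp
      obtain ⟨-, hq2⟩ := hq
      have h2 : p.2 = q.2 := (Prod.mk.injEq _ _ _ _).mp heq |>.1
      have hlen : (v p.1).length = (v q.1).length := (Prod.mk.injEq _ _ _ _).mp heq |>.2
      have hv : v p.1 = v q.1 := by
        rw [List.prefix_iff_eq_take.mp hp2, List.prefix_iff_eq_take.mp hq2, h2, hlen]
      exact Prod.ext (hvinj hv) h2
  simpa using key

lemma card_prefix_le_2 (n : ℕ) (v : Fin n → List ℕ+) (hvinj : Function.Injective v)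
    (H : ℕ) (hH : ∀ k, (v k).length ≤ H) :
    ((Finset.univ : Finset (Fin n)).offDiag.filter fun p => v p.2 <+: v p.1).card ≤ n * H := by
  classical
  have key : (((Finset.univ : Finset (Fin n)).offDiag.filter fun p => v p.2 <+: v p.1)).card ≤
      ((Finset.univ : Finset (Fin n)) ×ˢ Finset.range H).card := by
    apply Finset.card_le_card_of_injOn (fun p => (p.1, (v p.2).length))
    · intro p hp
      simp only [Finset.mem_coe, Finset.mem_filter, Finset.mem_offDiag] at hp
      obtain ⟨⟨-, -, hne⟩, hpre⟩ := hp
      simp only [Finset.mem_coe, Finset.mem_product, Finset.mem_univ, Finset.mem_range, true_and]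
      have hle := hpre.length_le
      have hne' : (v p.2).length ≠ (v p.1).length := by
        intro h
        exact hne (hvinj (hpre.eq_of_length h)).symm
      exact lt_of_lt_of_le (lt_of_le_of_ne hle hne') (hH p.1)
    · intro p hp q hq heq
      simp only [Finset.coe_filter, Set.mem_setOf_eq, Finset.mem_offDiag] at hp hq
      obtain ⟨-, hp2⟩ := hp
      obtain ⟨-, hq2⟩ := hq
      have h1 : p.1 = q.1 := (Prod.mk.injEq _ _ _ _).mp heq |>.1
      have hlen : (v p.2).length = (v q.2).length := (Prod.mk.injEq _ _ _ _).mp heq |>.2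
      have hv : v p.2 = v q.2 := by
        rw [List.prefix_iff_eq_take.mp hp2, List.prefix_iff_eq_take.mp hq2, h1, hlen]
      exact Prod.ext h1 (hvinj hv)
  simpa using key

/-- Let `n ≥ 2`, let `v 1, …, v n` be distinct finite sequences
of positive integers whose set is closed under taking initial segments, and let
`X 1, …, X n` be pairwise distinct infinite sequences with `v k` an initial
segment of `X k`.  With `Y := ∑_{k≠ℓ} lcp(v k, v ℓ)`,
`Ŷ := ∑_{k≠ℓ} lcp(X k, X ℓ)` (sums over ordered pairs of distinct indices),
`H := max_k |v k|` and `Ĥ := max_{k≠ℓ} lcp(X k, X ℓ)`, one has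
`0 ≤ Ŷ - Y ≤ 2 n H Ĥ` (i.e. `Y ≤ Ŷ` and `Ŷ ≤ Y + 2 n H Ĥ`), and `H ≤ Ĥ + 1`. -/
theorem stmt11_pathlength_approximation (n : ℕ) (hn : 2 ≤ n)
    (v : Fin n → List ℕ+) (hvinj : Function.Injective v)
    (hclosed : ∀ k : Fin n, ∀ u : List ℕ+, u <+: v k → ∃ l : Fin n, v l = u)
    (X : Fin n → ℕ → ℕ+)
    (hXdist : ∀ k l : Fin n, k ≠ l → X k ≠ X l)
    (hprefix : ∀ k : Fin n, ∀ i (h : i < (v k).length), (v k).get ⟨i, h⟩ = X k i) :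
    ((∑ p ∈ (Finset.univ : Finset (Fin n)).offDiag, lcpList (v p.1) (v p.2) : ℕ) : ℕ∞) ≤
        (∑ p ∈ (Finset.univ : Finset (Fin n)).offDiag, lcpSeq (X p.1) (X p.2)) ∧
      (∑ p ∈ (Finset.univ : Finset (Fin n)).offDiag, lcpSeq (X p.1) (X p.2)) ≤
        ((∑ p ∈ (Finset.univ : Finset (Fin n)).offDiag, lcpList (v p.1) (v p.2) : ℕ) : ℕ∞) +
          2 * (n : ℕ∞) * ((Finset.univ.sup fun k : Fin n => (v k).length : ℕ) : ℕ∞) *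
            ((Finset.univ : Finset (Fin n)).offDiag.sup fun p => lcpSeq (X p.1) (X p.2)) ∧
      ((Finset.univ.sup fun k : Fin n => (v k).length : ℕ) : ℕ∞) ≤
        ((Finset.univ : Finset (Fin n)).offDiag.sup fun p => lcpSeq (X p.1) (X p.2)) + 1 := by
  classical
  set s := (Finset.univ : Finset (Fin n)).offDiag with hs
  set f : Fin n × Fin n → ℕ := fun p => lcpList (v p.1) (v p.2) with hf
  set g : Fin n × Fin n → ℕ := fun p => natLcp (X p.1) (X p.2) with hg
  set H : ℕ := Finset.univ.sup (fun k : Fin n => (v k).length) with hHdef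
  set B : ℕ := s.sup g with hB
  have hne : ∀ p ∈ s, X p.1 ≠ X p.2 := fun p hp =>
    hXdist _ _ (Finset.mem_offDiag.mp hp).2.2
  have hpre : ∀ k : Fin n, ∀ i, ∀ h : i < (v k).length, (v k)[i] = X k i := by
    intro k i h
    have := hprefix k i h
    simpa [List.get_eq_getElem] using this
  -- (1) termwise lower bound
  have hfg : ∀ p ∈ s, f p ≤ g p := by
    intro p hp
    refine le_natLcp _ _ (hne p hp) _ (fun i hi => ?_)
    have h1 : i < (v p.1).length := lt_of_lt_of_le hi (lcpList_le_left _ _)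
    have h2 : i < (v p.2).length := lt_of_lt_of_le hi (lcpList_le_right _ _)
    have hgl := lcpList_get _ _ i hi
    rw [List.getElem?_eq_getElem h1, List.getElem?_eq_getElem h2] at hgl
    rw [← hpre p.1 i h1, ← hpre p.2 i h2]
    exact Option.some.inj hgl
  -- (2) termwise upper bound or prefix pair
  have key : ∀ p ∈ s, g p ≤ f p ∨ v p.1 <+: v p.2 ∨ v p.2 <+: v p.1 := by
    intro p hp
    set m := min (g p) (min (v p.1).length (v p.2).length) with hm
    have hmf : m ≤ f p := by
      apply le_lcpList
      · omega
      · omega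
      · intro i hi
        have hi1 : i < (v p.1).length := by omega
        have hi2 : i < (v p.2).length := by omega
        rw [List.getElem?_eq_getElem hi1, List.getElem?_eq_getElem hi2]
        have hgp : g p = natLcp (X p.1) (X p.2) := rfl
        have hXi : X p.1 i = X p.2 i := natLcp_spec_lt _ _ i (by omega)
        rw [hpre p.1 i hi1, hpre p.2 i hi2, hXi]
    have hfp : f p = lcpList (v p.1) (v p.2) := rfl
    by_cases hle : g p ≤ min (v p.1).length (v p.2).length
    · left; omega
    · right
      rcases le_total (v p.1).length (v p.2).length with h12 | h21
      · left
        exact prefix_of_lcpList _ _ (by omega)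
      · right
        apply prefix_of_lcpList
        rw [lcpList_comm]
        omega
  -- bad pairs
  set bad : Fin n × Fin n → Prop := fun p => v p.1 <+: v p.2 ∨ v p.2 <+: v p.1 with hbad
  have hHk : ∀ k, (v k).length ≤ H := fun k =>
    Finset.le_sup (f := fun k : Fin n => (v k).length) (Finset.mem_univ k)
  have hcard : (s.filter bad).card ≤ 2 * (n * H) := by
    have : s.filter bad ⊆
        (s.filter fun p => v p.1 <+: v p.2) ∪ (s.filter fun p => v p.2 <+: v p.1) := by
      intro p hp
      simp only [Finset.mem_filter, hbad] at hp
      rcases hp.2 with h | h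
      · exact Finset.mem_union_left _ (Finset.mem_filter.mpr ⟨hp.1, h⟩)
      · exact Finset.mem_union_right _ (Finset.mem_filter.mpr ⟨hp.1, h⟩)
    calc (s.filter bad).card ≤ _ := Finset.card_le_card this
      _ ≤ (s.filter fun p => v p.1 <+: v p.2).card +
          (s.filter fun p => v p.2 <+: v p.1).card := Finset.card_union_le _ _
      _ ≤ n * H + n * H := Nat.add_le_add
          (card_prefix_le_1 n v hvinj H hHk) (card_prefix_le_2 n v hvinj H hHk)
      _ = 2 * (n * H) := by ring
  -- (3) sum upper bound in ℕ
  have hsum2 : ∑ p ∈ s, g p ≤ (∑ p ∈ s, f p) + 2 * n * H * B := by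
    calc ∑ p ∈ s, g p ≤ ∑ p ∈ s, (f p + if bad p then B else 0) := by
          apply Finset.sum_le_sum
          intro p hp
          by_cases hb : bad p
          · rw [if_pos hb]
            have hgB : g p ≤ B := Finset.le_sup (f := g) hp
            omega
          · rw [if_neg hb]
            rcases key p hp with h | h
            · omega
            · exact absurd h hb
      _ = (∑ p ∈ s, f p) + ∑ p ∈ s, (if bad p then B else 0) := Finset.sum_add_distrib
      _ ≤ (∑ p ∈ s, f p) + 2 * n * H * B := by
          have heq : ∑ p ∈ s, (if bad p then B else 0) = (s.filter bad).card * B := by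
            rw [← Finset.sum_filter, Finset.sum_const, smul_eq_mul]
          rw [heq]
          have h2 : (s.filter bad).card * B ≤ 2 * n * H * B := by
            calc (s.filter bad).card * B ≤ (2 * (n * H)) * B := Nat.mul_le_mul_right _ hcard
              _ = 2 * n * H * B := by ring
          omega
  -- (4) H ≤ B + 1 in ℕ
  have hHB : H ≤ B + 1 := by
    have hnz : Nonempty (Fin n) := ⟨⟨0, by omega⟩⟩
    obtain ⟨k, -, hk⟩ := Finset.exists_mem_eq_sup (Finset.univ : Finset (Fin n))
      Finset.univ_nonempty (fun k : Fin n => (v k).length)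
    rcases Nat.eq_zero_or_pos H with h0 | hpos
    · omega
    · obtain ⟨l, hl⟩ := hclosed k ((v k).take (H - 1)) (List.take_prefix _ _)
      have hlen : (v l).length = H - 1 := by
        rw [hl, List.length_take]
        omega
      have hlk : l ≠ k := by
        intro h
        rw [h] at hlen
        omega
      have hps : (l, k) ∈ s := Finset.mem_offDiag.mpr ⟨Finset.mem_univ _, Finset.mem_univ _, hlk⟩
      have hpref : v l <+: v k := hl ▸ List.take_prefix _ _
      have h1 : H - 1 ≤ f (l, k) := by
        have : f (l, k) = (v l).length := lcpList_prefix _ _ hpref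
        omega
      have h2 := (h1.trans (hfg _ hps)).trans (Finset.le_sup (f := g) hps)
      omega
  -- conversions to ℕ∞
  have hseq : ∀ p ∈ s, lcpSeq (X p.1) (X p.2) = (g p : ℕ∞) := fun p hp =>
    lcpSeq_eq_natLcp _ _ (hne p hp)
  have hsumcast : (∑ p ∈ s, lcpSeq (X p.1) (X p.2)) = ((∑ p ∈ s, g p : ℕ) : ℕ∞) := by
    rw [Finset.sum_congr rfl hseq, Nat.cast_sum]
  have hmax : ∀ x y : ℕ, ((x ⊔ y : ℕ) : ℕ∞) = (x : ℕ∞) ⊔ (y : ℕ∞) := by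
    intro x y
    rcases le_total x y with h | h
    · rw [sup_eq_right.mpr h, sup_eq_right.mpr (by exact_mod_cast h)]
    · rw [sup_eq_left.mpr h, sup_eq_left.mpr (by exact_mod_cast h)]
  have hsupcast : (s.sup fun p => lcpSeq (X p.1) (X p.2)) = ((B : ℕ) : ℕ∞) := by
    rw [Finset.sup_congr rfl hseq, hB]
    exact (Finset.comp_sup_eq_sup_comp (Nat.cast : ℕ → ℕ∞) hmax (by simp)).symm
  refine ⟨?_, ?_, ?_⟩
  · rw [hsumcast]
    exact_mod_cast Finset.sum_le_sum hfg
  · rw [hsumcast, hsupcast]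
    have : (2 : ℕ∞) * (n : ℕ∞) * (H : ℕ∞) * (B : ℕ∞) = ((2 * n * H * B : ℕ) : ℕ∞) := by
      push_cast
      ring
    rw [this, ← Nat.cast_add, Nat.cast_le]
    exact hsum2
  · rw [hsupcast]
    exact_mod_cast hHB
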